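/- In the one-variable Sl(2)-orbit setting: let L ∈ ℝ and y ≥ 1 with λ²·y > L. If v ∈ Λ is self-dual at y and satisfies the tadpole bound L at y, then P_ℓ v = 0 for every ℓ ≠ 0 and C v = v (so v = P₀ v is a weight-zero, C-invariant flux). (Beyond a critical value of the saxion, determined by the tadpole bound, only weight-zero self-dual fluxes survive; paper §6.1.) -/

import Mathlib

/-- One-variable Sl(2)-orbit setting: beyond the critical value of the saxion `y`
determined by the tadpole bound (`λ² y > L`), a flux `v` in the lattice `Λ` that is
self-dual at `y` and satisfies the tadpole bound `L` at `y` has `P_ℓ v = 0` for all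
`ℓ ≠ 0` and is invariant under the boundary Weil operator: `C v = v`. -/
theorem selfdual_weight_zero_beyond_critical
    (V : Type*) [NormedAddCommGroup V] [InnerProductSpace ℝ V] [FiniteDimensional ℝ V]
    -- the orthogonal weight decomposition V = ⊕_ℓ V_ℓ, via its projections P ℓ
    (P : ℤ → (V →ₗ[ℝ] V))
    (hPfin : (Function.support P).Finite)
    (hPsum : ∀ v : V, ∑ᶠ ℓ : ℤ, P ℓ v = v)
    (hPproj : ∀ (ℓ : ℤ) (v : V), P ℓ (P ℓ v) = P ℓ v)
    (hPorth : ∀ ℓ ℓ' : ℤ, ℓ ≠ ℓ' → ∀ u w : V, (inner ℝ (P ℓ u) (P ℓ' w) : ℝ) = 0)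
    -- the boundary Weil operator C, a linear isometry with C(V_ℓ) = V_{-ℓ}
    (C : V →ₗ[ℝ] V)
    (hCiso : ∀ v : V, ‖C v‖ = ‖v‖)
    (hCw : ∀ ℓ : ℤ, Submodule.map C (LinearMap.range (P ℓ)) = LinearMap.range (P (-ℓ)))
    -- the flux lattice Λ and the integrality gap λ
    (Λ : AddSubgroup V)
    (lam : ℝ) (hlam : 0 < lam)
    (hgap : ∀ v ∈ Λ, ∀ ℓ : ℤ, P ℓ v = 0 ∨ lam ≤ ‖P ℓ v‖)
    -- the hypotheses of the statement
    (L y : ℝ) (hy : 1 ≤ y) (hcrit : L < lam ^ 2 * y)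
    (v : V) (hv : v ∈ Λ)
    (hsd : ∀ ℓ : ℤ, y ^ ℓ • P ℓ v = C (P (-ℓ) v))
    (htad : ∑ᶠ ℓ : ℤ, y ^ ℓ * ‖P ℓ v‖ ^ 2 ≤ L) :
    (∀ ℓ : ℤ, ℓ ≠ 0 → P ℓ v = 0) ∧ C v = v := by
  have hy0 : (0 : ℝ) < y := lt_of_lt_of_le one_pos hy
  set f : ℤ → ℝ := fun ℓ => y ^ ℓ * ‖P ℓ v‖ ^ 2 with hf
  have hfnn : ∀ ℓ, 0 ≤ f ℓ := fun ℓ =>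
    mul_nonneg (le_of_lt (zpow_pos hy0 ℓ)) (sq_nonneg _)
  have hfsupp : (Function.support f).Finite := by
    apply hPfin.subset
    intro ℓ hℓ
    simp only [Function.mem_support] at hℓ ⊢
    intro h
    apply hℓ
    simp [hf, h]
  have hsingle : ∀ ℓ, f ℓ ≤ ∑ᶠ j, f j := fun ℓ =>
    single_le_finsum ℓ hfsupp hfnn
  -- no positive weight survives
  have hpos : ∀ ℓ : ℤ, 1 ≤ ℓ → P ℓ v = 0 := by
    intro ℓ hℓ
    by_contra h
    rcases hgap v hv ℓ with h0 | hlow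
    · exact h h0
    have hyℓ : y ≤ y ^ ℓ := by
      calc y = y ^ (1 : ℤ) := (zpow_one y).symm
        _ ≤ y ^ ℓ := zpow_le_zpow_right₀ hy hℓ
    have hterm : lam ^ 2 * y ≤ f ℓ := by
      have h1 : lam ^ 2 ≤ ‖P ℓ v‖ ^ 2 :=
        pow_le_pow_left₀ (le_of_lt hlam) hlow 2
      calc lam ^ 2 * y ≤ ‖P ℓ v‖ ^ 2 * y ^ ℓ := by
            apply mul_le_mul h1 hyℓ (le_of_lt hy0) (sq_nonneg _)
        _ = f ℓ := by ring
    have := le_trans hterm (le_trans (hsingle ℓ) htad)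
    linarith
  have hnonzero : ∀ ℓ : ℤ, ℓ ≠ 0 → P ℓ v = 0 := by
    intro ℓ hℓ
    rcases lt_or_gt_of_ne hℓ with hneg | hposℓ
    · -- ℓ < 0 : use self-duality at -ℓ
      have h1 : y ^ (-ℓ) • P (-ℓ) v = C (P ℓ v) := by
        have := hsd (-ℓ); rwa [neg_neg] at this
      have h2 : P (-ℓ) v = 0 := hpos (-ℓ) (by omega)
      have h3 : C (P ℓ v) = 0 := by rw [← h1, h2, smul_zero]
      have h4 : ‖P ℓ v‖ = 0 := by rw [← hCiso, h3, norm_zero]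
      exact norm_eq_zero.mp h4
    · exact hpos ℓ hposℓ
  refine ⟨hnonzero, ?_⟩
  have hveq : v = P 0 v := by
    conv_lhs => rw [← hPsum v]
    exact finsum_eq_single (fun ℓ => P ℓ v) 0 (fun ℓ hℓ => hnonzero ℓ hℓ)
  have h0 : C (P 0 v) = P 0 v := by
    have := hsd 0
    rw [neg_zero] at this
    rw [← this, zpow_zero, one_smul]
  rw [hveq, h0]
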